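/- Let μ be an atomless Borel probability measure on ℝ and μ^5 the product measure on (Fin 5 → ℝ). Let A = { x | x 0 < x 1 ∧ x 2 < x 1 ∧ x 2 < x 3 ∧ x 4 < x 3 } (local maxima at positions 1 and 3) and B = { x | x 0 < x 1 ∧ x 2 < x 1 } (local maximum at position 1). Then the conditional probability μ^5(A) / μ^5(B) equals 2/5; i.e. the probability that the next local maximum after a given local maximum occurs at distance 2 is f_m(2) = 2/5. -/

import Mathlib

open MeasureTheory Set ENNReal

namespace FmTwo

variable (μ : Measure ℝ) [IsProbabilityMeasure μ] [NullSingletonClass μ]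

local notation "ν" => Measure.pi fun _ : Fin 5 => μ

/-- The set of tuples sorted strictly increasing by `σ`. -/
def S (σ : Equiv.Perm (Fin 5)) : Set (Fin 5 → ℝ) := {x | StrictMono (x ∘ σ)}

lemma measurableSet_S (σ : Equiv.Perm (Fin 5)) : MeasurableSet (S σ) := by
  have : S σ = ⋂ (a : Fin 5) (b : Fin 5) (_ : a < b), {x : Fin 5 → ℝ | x (σ a) < x (σ b)} := by
    ext x
    simp only [S, mem_setOf_eq, mem_iInter, StrictMono, Function.comp]
  rw [this]
  exact MeasurableSet.iInter fun a => MeasurableSet.iInter fun b => MeasurableSet.iInter fun _ =>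
    measurableSet_lt (measurable_pi_apply _) (measurable_pi_apply _)

lemma measurePreserving_comp (σ : Equiv.Perm (Fin 5)) :
    MeasurePreserving (fun x : Fin 5 → ℝ => x ∘ σ) ν ν := by
  constructor
  · exact measurable_pi_lambda _ fun i => measurable_pi_apply (σ i)
  · refine (Measure.pi_eq fun s hs => ?_).symm
    have hmeas : Measurable (fun x : Fin 5 → ℝ => x ∘ σ) :=
      measurable_pi_lambda _ fun i => measurable_pi_apply (σ i)
    rw [Measure.map_apply hmeas (MeasurableSet.univ_pi hs)]
    have hpre : (fun x : Fin 5 → ℝ => x ∘ σ) ⁻¹' (univ.pi s)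
        = univ.pi fun j => s (σ.symm j) := by
      ext x
      simp only [mem_preimage, mem_pi, mem_univ, true_imp_iff, Function.comp]
      constructor
      · intro h j; simpa using h (σ.symm j)
      · intro h i; simpa using h (σ i)
    rw [hpre, Measure.pi_pi]
    exact Equiv.prod_comp σ.symm fun i => μ (s i)

lemma measure_S (σ : Equiv.Perm (Fin 5)) : ν (S σ) = ν (S 1) := by
  have h := (measurePreserving_comp μ σ).measure_preimage
    (measurableSet_S 1).nullMeasurableSet
  have hpre : (fun x : Fin 5 → ℝ => x ∘ σ) ⁻¹' (S 1) = S σ := by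
    ext x
    simp [S, Function.comp]
  rwa [hpre] at h

lemma null_eq_coords (i j : Fin 5) (hij : i ≠ j) : ν {x | x i = x j} = 0 := by
  classical
  have hm : Measurable (fun x : Fin 5 → ℝ => (x i, x j)) :=
    (measurable_pi_apply i).prodMk (measurable_pi_apply j)
  have hmap : Measure.map (fun x => (x i, x j)) ν = μ.prod μ := by
    refine (Measure.prod_eq fun s t hs ht => ?_).symm
    rw [Measure.map_apply hm (hs.prod ht)]
    have hpre : (fun x : Fin 5 → ℝ => (x i, x j)) ⁻¹' (s ×ˢ t)
        = univ.pi fun k => if k = i then s else if k = j then t else univ := by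
      ext x
      simp only [mem_preimage, mem_prod, mem_pi, mem_univ, true_imp_iff]
      constructor
      · rintro ⟨h1, h2⟩ k
        split_ifs with h h'
        · subst h; exact h1
        · subst h'; exact h2
        · trivial
      · intro h
        refine ⟨?_, ?_⟩
        · have := h i; simpa using this
        · have := h j; simp only [if_neg (Ne.symm hij), if_pos rfl] at this; exact this
    rw [hpre, Measure.pi_pi]
    rw [← Finset.prod_subset (Finset.subset_univ ({i, j} : Finset (Fin 5)))
      (by intro k _ hk
          simp only [Finset.mem_insert, Finset.mem_singleton, not_or] at hk
          simp [hk.1, hk.2])]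
    rw [Finset.prod_pair hij]
    simp [Ne.symm hij]
  have hdiag : (μ.prod μ) {p : ℝ × ℝ | p.1 = p.2} = 0 := by
    have hms : MeasurableSet {p : ℝ × ℝ | p.1 = p.2} :=
      measurableSet_eq_fun measurable_fst measurable_snd
    rw [Measure.prod_apply hms]
    have : ∀ x : ℝ, μ (Prod.mk x ⁻¹' {p : ℝ × ℝ | p.1 = p.2}) = 0 := by
      intro x
      have : Prod.mk x ⁻¹' {p : ℝ × ℝ | p.1 = p.2} = {x} := by
        ext y; simp [eq_comm]
      rw [this]; exact measure_singleton x
    simp [this]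
  have : {x : Fin 5 → ℝ | x i = x j}
      = (fun x : Fin 5 → ℝ => (x i, x j)) ⁻¹' {p : ℝ × ℝ | p.1 = p.2} := rfl
  rw [this, ← Measure.map_apply hm (measurableSet_eq_fun measurable_fst measurable_snd), hmap,
    hdiag]

lemma null_noninj : ν {x : Fin 5 → ℝ | ¬ Function.Injective x} = 0 := by
  classical
  have hsub : {x : Fin 5 → ℝ | ¬ Function.Injective x}
      ⊆ ⋃ (i : Fin 5) (j : Fin 5) (_ : i ≠ j), {x : Fin 5 → ℝ | x i = x j} := by
    intro x hx
    simp only [mem_setOf_eq, Function.Injective, not_forall] at hx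
    obtain ⟨i, j, hij, hne⟩ := hx
    simp only [mem_iUnion]
    exact ⟨i, j, hne, hij⟩
  refine measure_mono_null hsub ?_
  refine measure_iUnion_null fun i => measure_iUnion_null fun j => measure_iUnion_null fun h => ?_
  exact null_eq_coords μ i j h

lemma disjoint_S : Pairwise (Function.onFun Disjoint (S : Equiv.Perm (Fin 5) → Set (Fin 5 → ℝ))) := by
  intro σ τ hne
  rw [Function.onFun, Set.disjoint_left]
  intro x hσ hτ
  apply hne
  have hπ : StrictMono ⇑(σ⁻¹ * τ) := by
    intro a b hab
    have h1 : (x ∘ σ) ((σ⁻¹ * τ) a) < (x ∘ σ) ((σ⁻¹ * τ) b) := by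
      simpa [Function.comp, Equiv.Perm.mul_apply] using hτ hab
    exact hσ.lt_iff_lt.mp h1
  have hrange : Set.range ⇑(σ⁻¹ * τ) = Set.range (id : Fin 5 → Fin 5) := by
    simp [Set.range_eq_univ.mpr (σ⁻¹ * τ).surjective]
  haveI : WellFoundedLT (Fin 5) := inferInstance
  have : ⇑(σ⁻¹ * τ) = id :=
    (StrictMono.range_inj (β := Fin 5) (γ := Fin 5) (f := ⇑(σ⁻¹ * τ)) (g := id)
      hπ strictMono_id).mp hrange
  have h1 : σ⁻¹ * τ = 1 := Equiv.ext fun a => congrFun this a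
  have : τ = σ := by
    have := congrArg (fun p => σ * p) h1
    simpa [mul_assoc] using this
  exact this.symm

lemma exists_S {x : Fin 5 → ℝ} (hx : Function.Injective x) :
    ∃ σ : Equiv.Perm (Fin 5), x ∈ S σ := by
  refine ⟨Tuple.sort x, ?_⟩
  have hmono := Tuple.monotone_sort x
  have hinj : Function.Injective (x ∘ Tuple.sort x) :=
    hx.comp (Tuple.sort x).injective
  exact hmono.strictMono_of_injective hinj

lemma rank_lt {x : Fin 5 → ℝ} {σ : Equiv.Perm (Fin 5)} (hx : x ∈ S σ) (i j : Fin 5) :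
    x i < x j ↔ σ⁻¹ i < σ⁻¹ j := by
  have := hx.lt_iff_lt (a := σ⁻¹ i) (b := σ⁻¹ j)
  simpa [Function.comp] using this

lemma measure_S_one : (120 : ℝ≥0∞) * ν (S 1) = 1 := by
  classical
  have hU : ν (⋃ (σ : Equiv.Perm (Fin 5)), S σ) = 1 := by
    have hle : (1 : ℝ≥0∞) ≤ ν (⋃ (σ : Equiv.Perm (Fin 5)), S σ) := by
      have hcov : (univ : Set (Fin 5 → ℝ))
          ⊆ (⋃ (σ : Equiv.Perm (Fin 5)), S σ) ∪ {x | ¬ Function.Injective x} := by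
        intro x _
        by_cases hx : Function.Injective x
        · obtain ⟨σ, hσ⟩ := exists_S hx
          exact Or.inl (mem_iUnion.mpr ⟨σ, hσ⟩)
        · exact Or.inr hx
      calc (1 : ℝ≥0∞) = ν univ := (measure_univ).symm
        _ ≤ ν ((⋃ (σ : Equiv.Perm (Fin 5)), S σ) ∪ {x | ¬ Function.Injective x}) :=
            measure_mono hcov
        _ ≤ ν (⋃ (σ : Equiv.Perm (Fin 5)), S σ) + ν {x | ¬ Function.Injective x} :=
            measure_union_le _ _
        _ = ν (⋃ (σ : Equiv.Perm (Fin 5)), S σ) := by rw [null_noninj μ, add_zero]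
    exact le_antisymm prob_le_one hle
  have hsum : ν (⋃ (σ : Equiv.Perm (Fin 5)), S σ) = ∑ σ : Equiv.Perm (Fin 5), ν (S σ) := by
    rw [measure_iUnion (disjoint_S) (fun σ => measurableSet_S σ), tsum_fintype]
  rw [hsum] at hU
  have : ∑ σ : Equiv.Perm (Fin 5), ν (S σ) = (120 : ℝ≥0∞) * ν (S 1) := by
    simp_rw [measure_S μ]
    rw [Finset.sum_const, nsmul_eq_mul]
    norm_num [Fintype.card_perm, Nat.factorial]
  rw [← this, hU]

/-- General counting lemma. -/
lemma measure_pattern (P : Set (Fin 5 → ℝ)) (hP : MeasurableSet P)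
    (C : Equiv.Perm (Fin 5) → Prop) [DecidablePred C]
    (hPC : ∀ σ : Equiv.Perm (Fin 5), ∀ x ∈ S σ, x ∈ P ↔ C σ) :
    ν P = (Finset.univ.filter C).card * ν (S 1) := by
  classical
  set U := ⋃ (σ : Equiv.Perm (Fin 5)), S σ with hUdef
  have hPU : ν P = ν (P ∩ U) := by
    refine le_antisymm ?_ (measure_mono (inter_subset_left))
    have : P ⊆ (P ∩ U) ∪ {x | ¬ Function.Injective x} := by
      intro x hx
      by_cases hinj : Function.Injective x
      · obtain ⟨σ, hσ⟩ := exists_S hinj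
        exact Or.inl ⟨hx, mem_iUnion.mpr ⟨σ, hσ⟩⟩
      · exact Or.inr hinj
    calc ν P ≤ ν ((P ∩ U) ∪ {x | ¬ Function.Injective x}) := measure_mono this
      _ ≤ ν (P ∩ U) + ν {x | ¬ Function.Injective x} := measure_union_le _ _
      _ = ν (P ∩ U) := by rw [null_noninj μ, add_zero]
  have hPiU : P ∩ U = ⋃ σ : Equiv.Perm (Fin 5), (P ∩ S σ) := by
    rw [hUdef, inter_iUnion]
  have hPS : ∀ σ : Equiv.Perm (Fin 5), P ∩ S σ = if C σ then S σ else ∅ := by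
    intro σ
    split_ifs with h
    · ext x
      exact ⟨fun hx => hx.2, fun hx => ⟨(hPC σ x hx).mpr h, hx⟩⟩
    · ext x
      simp only [mem_inter_iff, mem_empty_iff_false, iff_false, not_and]
      intro hxP hxS
      exact h ((hPC σ x hxS).mp hxP)
  have hdisj2 : Pairwise (Function.onFun Disjoint
      (fun σ : Equiv.Perm (Fin 5) => P ∩ S σ)) := by
    intro σ τ hne
    exact (disjoint_S hne).mono inter_subset_right inter_subset_right
  have hms2 : ∀ σ : Equiv.Perm (Fin 5), MeasurableSet (P ∩ S σ) :=
    fun σ => hP.inter (measurableSet_S σ)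
  rw [hPU, hPiU, measure_iUnion hdisj2 hms2, tsum_fintype]
  have : ∀ σ : Equiv.Perm (Fin 5), ν (P ∩ S σ) = if C σ then ν (S 1) else 0 := by
    intro σ
    rw [hPS σ]
    split_ifs
    · exact measure_S μ σ
    · exact measure_empty
  simp_rw [this]
  rw [Finset.sum_ite, Finset.sum_const, Finset.sum_const_zero, add_zero, nsmul_eq_mul]

end FmTwo

open FmTwo in
theorem fm_two_eq_two_fifths
    (μ : Measure ℝ) [IsProbabilityMeasure μ] [NullSingletonClass μ] :
    (Measure.pi fun _ : Fin 5 => μ)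
        {x | x 0 < x 1 ∧ x 2 < x 1 ∧ x 2 < x 3 ∧ x 4 < x 3} /
      (Measure.pi fun _ : Fin 5 => μ) {x | x 0 < x 1 ∧ x 2 < x 1} = 2 / 5 := by
  classical
  set m := (Measure.pi fun _ : Fin 5 => μ) (S 1) with hm
  have h120 : (120 : ℝ≥0∞) * m = 1 := measure_S_one μ
  have hm0 : m ≠ 0 := by
    intro h; rw [h, mul_zero] at h120; exact one_ne_zero h120.symm
  have hmtop : m ≠ ⊤ := by
    intro h; rw [h] at h120; simp at h120
  have hA : (Measure.pi fun _ : Fin 5 => μ)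
      {x | x 0 < x 1 ∧ x 2 < x 1 ∧ x 2 < x 3 ∧ x 4 < x 3}
      = ((Finset.univ.filter fun σ : Equiv.Perm (Fin 5) =>
          σ⁻¹ 0 < σ⁻¹ 1 ∧ σ⁻¹ 2 < σ⁻¹ 1 ∧ σ⁻¹ 2 < σ⁻¹ 3 ∧ σ⁻¹ 4 < σ⁻¹ 3).card : ℝ≥0∞) * m := by
    refine measure_pattern μ _ ?_ _ ?_
    · exact ((measurableSet_lt (measurable_pi_apply 0) (measurable_pi_apply 1)).inter
        ((measurableSet_lt (measurable_pi_apply 2) (measurable_pi_apply 1)).inter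
        ((measurableSet_lt (measurable_pi_apply 2) (measurable_pi_apply 3)).inter
        (measurableSet_lt (measurable_pi_apply 4) (measurable_pi_apply 3)))))
    · intro σ x hx
      simp only [mem_setOf_eq]
      rw [rank_lt hx 0 1, rank_lt hx 2 1, rank_lt hx 2 3, rank_lt hx 4 3]
  have hB : (Measure.pi fun _ : Fin 5 => μ) {x | x 0 < x 1 ∧ x 2 < x 1}
      = ((Finset.univ.filter fun σ : Equiv.Perm (Fin 5) =>
          σ⁻¹ 0 < σ⁻¹ 1 ∧ σ⁻¹ 2 < σ⁻¹ 1).card : ℝ≥0∞) * m := by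
    refine measure_pattern μ _ ?_ _ ?_
    · exact ((measurableSet_lt (measurable_pi_apply 0) (measurable_pi_apply 1)).inter
        (measurableSet_lt (measurable_pi_apply 2) (measurable_pi_apply 1)))
    · intro σ x hx
      simp only [mem_setOf_eq]
      rw [rank_lt hx 0 1, rank_lt hx 2 1]
  have hcardA : (Finset.univ.filter fun σ : Equiv.Perm (Fin 5) =>
      σ⁻¹ 0 < σ⁻¹ 1 ∧ σ⁻¹ 2 < σ⁻¹ 1 ∧ σ⁻¹ 2 < σ⁻¹ 3 ∧ σ⁻¹ 4 < σ⁻¹ 3).card = 16 := by decide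
  have hcardB : (Finset.univ.filter fun σ : Equiv.Perm (Fin 5) =>
      σ⁻¹ 0 < σ⁻¹ 1 ∧ σ⁻¹ 2 < σ⁻¹ 1).card = 40 := by decide
  rw [hA, hB, hcardA, hcardB]
  have h16 : ((16 : ℕ) : ℝ≥0∞) = 2 * 8 := by norm_num
  have h40 : ((40 : ℕ) : ℝ≥0∞) = 5 * 8 := by norm_num
  rw [ENNReal.mul_div_mul_right _ _ hm0 hmtop, h16, h40,
    ENNReal.mul_div_mul_right _ _ (by norm_num) (by norm_num)]
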